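/- If p cops play the one-proximity game on a finite graph G and p·(Δ(G)+1) ≤ H_V(G) with H_V(G) ≥ Δ(G)+1, then for the contamination sets S_t defined by any cop probe sequence, S_t is nonempty for all t; in particular prox_1(G) > H_V(G)/(Δ(G)+1). -/

import Mathlib

open scoped Classical
open Finset

variable {V : Type*}

/-- External vertex boundary: vertices outside `S` adjacent to some vertex of `S`. -/
noncomputable def vBoundary [Fintype V] (G : SimpleGraph V) (S : Finset V) : Finset V :=
  Finset.univ.filter fun v => v ∉ S ∧ ∃ u ∈ S, G.Adj u v

/-- Vertex isoperimetric number `Φ_V(G,k)`. -/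
noncomputable def PhiV [Fintype V] (G : SimpleGraph V) (k : ℕ) : ℕ :=
  sInf {m | ∃ S : Finset V, S.card = k ∧ (vBoundary G S).card = m}

/-- Number of edges with exactly one endpoint in `S`. -/
noncomputable def edgeBoundaryCard [Fintype V] (G : SimpleGraph V) (S : Finset V) : ℕ :=
  (Finset.univ.filter fun p : V × V => p.1 ∈ S ∧ p.2 ∉ S ∧ G.Adj p.1 p.2).card

/-- Edge isoperimetric number `Φ_E(G,k)`. -/
noncomputable def PhiE [Fintype V] (G : SimpleGraph V) (k : ℕ) : ℕ :=
  sInf {m | ∃ S : Finset V, S.card = k ∧ edgeBoundaryCard G S = m}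

/-- Vertex isoperimetric peak `Φ_V(G)`. -/
noncomputable def PhiVPeak [Fintype V] (G : SimpleGraph V) : ℕ :=
  (Finset.Icc 1 (Fintype.card V)).sup (PhiV G)

/-- Edge isoperimetric peak `Φ_E(G)`. -/
noncomputable def PhiEPeak [Fintype V] (G : SimpleGraph V) : ℕ :=
  (Finset.Icc 1 (Fintype.card V)).sup (PhiE G)

/-- The h-index of a function `f : ℕ → ℕ`: the largest `h` such that `f k ≥ h`
for `h` consecutive values `k1 ≤ k ≤ k1 + h - 1`. -/
noncomputable def hIndex (f : ℕ → ℕ) : ℕ :=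
  sSup {h : ℕ | ∃ k1 : ℕ, ∀ k, k1 ≤ k → k < k1 + h → h ≤ f k}
/-- Closed neighborhood of `v` as a finset. -/
noncomputable def closedNbr [Fintype V] (G : SimpleGraph V) (v : V) : Finset V :=
  insert v (Finset.univ.filter (G.Adj v))

/-- Contamination sets of the single-player one-proximity game: `contam G P t`
is the set of possible robber locations after the cops' `(t+1)`-st move, where
the cops probe the vertices `P t` in round `t+1` (0-indexed).  Initially every
vertex is contaminated; a cop probe at `v` clears `N[v]`, and between cop moves
the contamination spreads to the boundary. -/
noncomputable def contam [Fintype V] (G : SimpleGraph V) (P : ℕ → Finset V) :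
    ℕ → Finset V
  | 0 => Finset.univ \ (P 0).biUnion (closedNbr G)
  | t + 1 =>
      (contam G P t ∪ vBoundary G (contam G P t)) \ (P (t + 1)).biUnion (closedNbr G)

/-- `p` cops win the one-proximity game (contamination model): some sequence of
probe sets of size at most `p` clears all contamination. -/
def ProxWinsSets [Fintype V] (G : SimpleGraph V) (p : ℕ) : Prop :=
  ∃ P : ℕ → Finset V, (∀ t, (P t).card ≤ p) ∧ ∃ t, contam G P t = ∅

/-- The one-proximity number `prox₁(G)`. -/
noncomputable def prox1 [Fintype V] (G : SimpleGraph V) : ℕ :=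
  sInf {p | ProxWinsSets G p}

section Aux

variable [Fintype V] (G : SimpleGraph V)

lemma phiV_le_of_card {k : ℕ} {S : Finset V} (h : S.card = k) :
    PhiV G k ≤ (vBoundary G S).card := Nat.sInf_le ⟨S, h, rfl⟩

lemma phiV_eq_zero_of_gt {k : ℕ} (hk : Fintype.card V < k) : PhiV G k = 0 := by
  have he : {m | ∃ S : Finset V, S.card = k ∧ (vBoundary G S).card = m} = ∅ := by
    ext m
    simp only [Set.mem_setOf_eq, Set.mem_empty_iff_false, iff_false]
    rintro ⟨S, hS, -⟩
    have := Finset.card_le_univ S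
    omega
  simp [PhiV, he]

lemma phiV_card_eq_zero : PhiV G (Fintype.card V) = 0 := by
  have h : PhiV G (Fintype.card V) ≤ (vBoundary G Finset.univ).card :=
    phiV_le_of_card G (by simp)
  have hb : vBoundary G (Finset.univ : Finset V) = ∅ := by
    ext v; simp [vBoundary]
  rw [hb] at h
  simpa using h

lemma phiV_zero_eq_zero : PhiV G 0 = 0 := by
  have h : PhiV G 0 ≤ (vBoundary G (∅ : Finset V)).card :=
    phiV_le_of_card G (by simp)
  have hb : vBoundary G (∅ : Finset V) = ∅ := by
    ext v; simp [vBoundary]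
  rw [hb] at h
  simpa using h

lemma closedNbr_card_le (v : V) : (closedNbr G v).card ≤ G.maxDegree + 1 := by
  have h1 : (closedNbr G v).card ≤ (Finset.univ.filter (G.Adj v)).card + 1 :=
    Finset.card_insert_le _ _
  have h2 : Finset.univ.filter (G.Adj v) = G.neighborFinset v := by
    ext u; simp [SimpleGraph.mem_neighborFinset]
  rw [h2] at h1
  have h3 := G.degree_le_maxDegree v
  rw [SimpleGraph.degree] at h3
  omega

lemma probe_card_le (p : ℕ) (Q : Finset V) (hQ : Q.card ≤ p) :
    (Q.biUnion (closedNbr G)).card ≤ p * (G.maxDegree + 1) := by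
  calc (Q.biUnion (closedNbr G)).card
      ≤ Q.card * (G.maxDegree + 1) :=
        Finset.card_biUnion_le_card_mul _ _ _ fun v _ => closedNbr_card_le G v
    _ ≤ p * (G.maxDegree + 1) := Nat.mul_le_mul_right _ hQ

lemma disjoint_vBoundary (S : Finset V) : Disjoint S (vBoundary G S) :=
  Finset.disjoint_left.mpr fun a ha hb => ((Finset.mem_filter.mp hb).2.1 ha)

lemma contam_card_ge (P : ℕ → Finset V) (p k1 H : ℕ)
    (hwin : ∀ k, k1 ≤ k → k < k1 + H → H ≤ PhiV G k)
    (hn : k1 + H ≤ Fintype.card V)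
    (hpH : p * (G.maxDegree + 1) ≤ H)
    (hP : ∀ s, (P s).card ≤ p) :
    ∀ t, k1 ≤ (contam G P t).card := by
  intro t
  induction t with
  | zero =>
    have hB := probe_card_le G p (P 0) (hP 0)
    have hc : (contam G P 0).card
        = Fintype.card V - ((P 0).biUnion (closedNbr G)).card := by
      show (Finset.univ \ (P 0).biUnion (closedNbr G)).card = _
      rw [Finset.card_sdiff_of_subset (Finset.subset_univ _), Finset.card_univ]
    omega
  | succ t ih =>
    set S := contam G P t with hS
    have hB := probe_card_le G p (P (t + 1)) (hP (t + 1))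
    have hunion : (S ∪ vBoundary G S).card = S.card + (vBoundary G S).card :=
      Finset.card_union_of_disjoint (disjoint_vBoundary G S)
    have hsd : (S ∪ vBoundary G S).card - ((P (t + 1)).biUnion (closedNbr G)).card
        ≤ (contam G P (t + 1)).card := Finset.le_card_sdiff _ _
    rcases lt_or_ge S.card (k1 + H) with hcase | hcase
    · have hδ : H ≤ (vBoundary G S).card :=
        le_trans (hwin S.card ih hcase) (phiV_le_of_card G rfl)
      omega
    · omega

end Aux

/-- If `p·(Δ(G)+1) ≤ H_V(G)` and `H_V(G) ≥ Δ(G)+1`, then no sequence of probe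
sets of size at most `p` ever clears all contamination; in particular
`prox₁(G) > H_V(G)/(Δ(G)+1)`. -/
theorem prox1_gt_hIndexV_div [Fintype V] (G : SimpleGraph V)
    (hG : G.Connected) (hH : G.maxDegree + 1 ≤ hIndex (PhiV G)) :
    (∀ p : ℕ, p * (G.maxDegree + 1) ≤ hIndex (PhiV G) →
      ∀ P : ℕ → Finset V, (∀ s, (P s).card ≤ p) →
        ∀ t, (contam G P t).Nonempty) ∧
    (hIndex (PhiV G) : ℚ) / (G.maxDegree + 1) < prox1 G := by
  set H := hIndex (PhiV G) with hHdef
  have hH1 : 1 ≤ H := by omega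
  -- H is attained
  have hmem : H ∈ {h : ℕ | ∃ k1 : ℕ, ∀ k, k1 ≤ k → k < k1 + h → h ≤ PhiV G k} := by
    rw [hHdef, hIndex]
    apply Nat.sSup_mem
    · exact ⟨0, 0, fun k hk hk' => (Nat.zero_le _)⟩
    · refine ⟨Fintype.card V, ?_⟩
      rintro h ⟨k1, hk1⟩
      rcases Nat.eq_zero_or_pos h with rfl | hpos
      · exact Nat.zero_le _
      have hh : h ≤ PhiV G k1 := hk1 k1 le_rfl (by omega)
      rcases le_or_gt k1 (Fintype.card V) with hle | hgt
      · obtain ⟨S, -, hS⟩ := Finset.exists_subset_card_eq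
          (le_trans hle (le_of_eq (Finset.card_univ (α := V)).symm))
        calc h ≤ PhiV G k1 := hh
          _ ≤ (vBoundary G S).card := phiV_le_of_card G hS
          _ ≤ Fintype.card V := by
              rw [← Finset.card_univ]; exact Finset.card_le_univ _
      · rw [phiV_eq_zero_of_gt G hgt] at hh; omega
  obtain ⟨k1, hwin⟩ := hmem
  have hk11 : 1 ≤ k1 := by
    by_contra h
    have h0 : k1 = 0 := by omega
    have := hwin k1 le_rfl (by omega)
    rw [h0, phiV_zero_eq_zero] at this
    omega
  have hn : k1 + H ≤ Fintype.card V := by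
    have hlast := hwin (k1 + H - 1) (by omega) (by omega)
    by_contra h
    rcases lt_or_ge (Fintype.card V) (k1 + H - 1) with hc | hc
    · rw [phiV_eq_zero_of_gt G hc] at hlast; omega
    · have heq : k1 + H - 1 = Fintype.card V := by omega
      rw [heq, phiV_card_eq_zero] at hlast; omega
  have main : ∀ p : ℕ, p * (G.maxDegree + 1) ≤ H →
      ∀ P : ℕ → Finset V, (∀ s, (P s).card ≤ p) →
        ∀ t, (contam G P t).Nonempty := by
    intro p hp P hP t
    have := contam_card_ge G P p k1 H hwin hn hp hP t
    exact Finset.card_pos.mp (by omega)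
  refine ⟨main, ?_⟩
  -- the cops can win with `Fintype.card V` cops
  have hwins : ProxWinsSets G (Fintype.card V) := by
    refine ⟨fun _ => Finset.univ, fun t => by simp, 0, ?_⟩
    show Finset.univ \ Finset.univ.biUnion (closedNbr G) = ∅
    rw [Finset.sdiff_eq_empty_iff_subset]
    intro v _
    exact Finset.mem_biUnion.mpr ⟨v, Finset.mem_univ v, Finset.mem_insert_self _ _⟩
  have hproxmem : ProxWinsSets G (prox1 G) := Nat.sInf_mem (⟨Fintype.card V, hwins⟩ : Set.Nonempty {p | ProxWinsSets G p})
  obtain ⟨P, hP, t, ht⟩ := hproxmem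
  have hgt : H < prox1 G * (G.maxDegree + 1) := by
    by_contra h
    have := main (prox1 G) (by omega) P hP t
    rw [ht] at this
    exact Finset.not_nonempty_empty this
  have hd : (0 : ℚ) < (G.maxDegree : ℚ) + 1 := by positivity
  rw [div_lt_iff₀ hd]
  exact_mod_cast hgt
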